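/- Let H = (V, E) be a finite simple graph on n vertices, with one qubit per vertex, let |H⟩ be the associated graph state, and let D ∈ F₂^V be the vector with D_b = 1 if and only if vertex b has even degree in H. Then for every z ∈ F₂^V there exists a complex phase c with c = i^n or c = −i^n such that σ_y^{⊗n} σ_z^z |H⟩ = c · σ_z^{z + D} |H⟩, where the addition z + D is componentwise modulo 2. -/

import Mathlib

open scoped BigOperators ComplexConjugate ComplexOrder

noncomputable section

namespace QIpaper

/-- Inner product `⟨ψ|φ⟩`, conjugate-linear in the first argument. -/
def braket {I : Type*} [Fintype I] (ψ φ : I → ℂ) : ℂ := ∑ x, conj (ψ x) * φ x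

/-- Outer product `|ψ⟩⟨ψ|`. -/
def dm {I : Type*} (ψ : I → ℂ) : Matrix I I ℂ := Matrix.of fun x y => ψ x * conj (ψ y)

open Classical in
/-- Positive semidefinite square root (junk value `0` on non-PSD matrices). -/
def psdSqrt {I : Type*} [Fintype I] [DecidableEq I] (A : Matrix I I ℂ) : Matrix I I ℂ :=
  if h : A.PosSemidef then
    (h.1.eigenvectorUnitary : Matrix I I ℂ) *
      Matrix.diagonal ((↑) ∘ (fun x : ℝ => Real.sqrt x) ∘ h.1.eigenvalues) *
      (star (h.1.eigenvectorUnitary : Matrix I I ℂ))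
  else 0

/-- The trace norm `‖A‖₁ = tr √(AᴴA)`. -/
def traceNorm {I : Type*} [Fintype I] [DecidableEq I] (A : Matrix I I ℂ) : ℝ :=
  (psdSqrt (A.conjTranspose * A)).trace.re

/-- Fidelity `F(ρ,σ) = tr √(√ρ σ √ρ)`. -/
def fidelity {I : Type*} [Fintype I] [DecidableEq I] (ρ σ : Matrix I I ℂ) : ℝ :=
  (psdSqrt (psdSqrt ρ * σ * psdSqrt ρ)).trace.re

/-- Purity `tr(ρ²)`. -/
def purity {I : Type*} [Fintype I] (ρ : Matrix I I ℂ) : ℝ := ((ρ * ρ).trace).re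

def sigmaX : Matrix (Fin 2) (Fin 2) ℂ := !![0, 1; 1, 0]
def sigmaY : Matrix (Fin 2) (Fin 2) ℂ := !![0, -Complex.I; Complex.I, 0]
def sigmaZ : Matrix (Fin 2) (Fin 2) ℂ := !![1, 0; 0, -1]

/-- `σ_y^{⊗I}` on the qubits indexed by `I`. -/
def sigmaYn {I : Type*} [Fintype I] [DecidableEq I] : Matrix (I → Fin 2) (I → Fin 2) ℂ :=
  Matrix.of fun x y => ∏ k, sigmaY (x k) (y k)

/-- The `n`-tangle `τ(ψ) = |⟨ψ|σ_y^{⊗n}|ψ*⟩|`. -/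
def tangle {I : Type*} [Fintype I] [DecidableEq I] (ψ : (I → Fin 2) → ℂ) : ℝ :=
  ‖(∑ x, ∑ y, conj (ψ x) * sigmaYn x y * conj (ψ y))‖

/-- Entrywise complex conjugate of a matrix. -/
def conjM {I J : Type*} (ρ : Matrix I J ℂ) : Matrix I J ℂ := Matrix.of fun x y => conj (ρ x y)

/-- `ρ̃ = σ_y^{⊗n} ρ* σ_y^{⊗n}`. -/
def tildeM {I : Type*} [Fintype I] [DecidableEq I] (ρ : Matrix (I → Fin 2) (I → Fin 2) ℂ) :
    Matrix (I → Fin 2) (I → Fin 2) ℂ := sigmaYn * conjM ρ * sigmaYn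

/-- The Wootters tilde `|ψ̃⟩ = σ_y^{⊗n}|ψ*⟩`. -/
def wtilde {I : Type*} [Fintype I] [DecidableEq I] (ψ : (I → Fin 2) → ℂ) : (I → Fin 2) → ℂ :=
  sigmaYn.mulVec (fun x => conj (ψ x))

/-- Reduced density matrix of the pure state `ψ` on the qubits in `s`
(tracing out the complement). -/
def reduced {n : ℕ} (s : Finset (Fin n)) (ψ : (Fin n → Fin 2) → ℂ) :
    Matrix ({i : Fin n // i ∈ s} → Fin 2) ({i : Fin n // i ∈ s} → Fin 2) ℂ :=
  Matrix.of fun a b => ∑ c : {i : Fin n // i ∉ s} → Fin 2,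
    ψ (fun i => if h : i ∈ s then a ⟨i, h⟩ else c ⟨i, h⟩) *
    conj (ψ (fun i => if h : i ∈ s then b ⟨i, h⟩ else c ⟨i, h⟩))

/-- GME-concurrence `C_GME(ψ) = min_{∅ ⊊ γ ⊊ [n]} √(2(1 − tr ψ_γ²))`. -/
def gme {n : ℕ} (ψ : (Fin n → Fin 2) → ℂ) : ℝ :=
  sInf {r : ℝ | ∃ γ : Finset (Fin n), γ ≠ ∅ ∧ γ ≠ Finset.univ ∧
    r = Real.sqrt (2 * (1 - purity (reduced γ ψ)))}

/-- Concentratable entanglement `C(ψ; s) = 1 − 2^{−|s|} Σ_{γ⊆s} tr(ψ_γ²)`. -/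
def CE {n : ℕ} (ψ : (Fin n → Fin 2) → ℂ) (s : Finset (Fin n)) : ℝ :=
  1 - (1 / 2 ^ s.card) * ∑ γ ∈ s.powerset, purity (reduced γ ψ)

/-- The subnormalized post-measurement vector `(⟨v|⊗I)|Ψ⟩`. -/
def contract {IA IB : Type*} [Fintype IA] (v : IA → ℂ) (Ψ : IA × IB → ℂ) : IB → ℂ :=
  fun y => ∑ x, conj (v x) * Ψ (x, y)

/-- Probability `p_v = ⟨Ψ|(|v⟩⟨v| ⊗ I)|Ψ⟩` of outcome `v`. -/
def prob {IA IB : Type*} [Fintype IA] [Fintype IB] (v : IA → ℂ) (Ψ : IA × IB → ℂ) : ℝ :=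
  (braket (contract v Ψ) (contract v Ψ)).re

/-- Normalized post-measurement state (the zero vector when the probability vanishes). -/
def postState {IA IB : Type*} [Fintype IA] [Fintype IB] (v : IA → ℂ) (Ψ : IA × IB → ℂ) :
    IB → ℂ := fun y => ((Real.sqrt (prob v Ψ) : ℂ))⁻¹ * contract v Ψ y

/-- `b` is an orthonormal family. (An orthonormal family indexed by the space's own
index type is an orthonormal basis.) -/
def ONB {J I : Type*} [Fintype I] [DecidableEq J] (b : J → I → ℂ) : Prop :=
  ∀ i j, braket (b i) (b j) = if i = j then 1 else 0

/-- Average post-measurement entanglement `Ē_β(Ψ) = Σ_i p_i E(φ_i)`. -/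
def avgE {ι IA IB : Type*} [Fintype ι] [Fintype IA] [Fintype IB]
    (E : (IB → ℂ) → ℝ) (b : ι → IA → ℂ) (Ψ : IA × IB → ℂ) : ℝ :=
  ∑ i, prob (b i) Ψ * E (postState (b i) Ψ)

/-- Multipartite entanglement of assistance: supremum of `Ē_β` over all
orthonormal bases `β` of `H_A`. -/
def Lglobal {IA IB : Type*} [Fintype IA] [Fintype IB] [DecidableEq IA]
    (E : (IB → ℂ) → ℝ) (Ψ : IA × IB → ℂ) : ℝ :=
  sSup {r : ℝ | ∃ b : IA → IA → ℂ, ONB b ∧ r = avgE E b Ψ}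

/-- Tensor-product basis of `(ℂ²)^{⊗K}` built from single-qubit bases. -/
def productBasis {K : Type*} [Fintype K] (q : K → Fin 2 → Fin 2 → ℂ) :
    (K → Fin 2) → (K → Fin 2) → ℂ :=
  fun i x => ∏ k, q k (i k) (x k)

/-- Localizable multipartite entanglement: supremum of `Ē_β` over product bases of
single-qubit orthonormal bases of `H_A = (ℂ²)^{⊗K}`. -/
def Lloc {K IB : Type*} [Fintype K] [DecidableEq K] [Fintype IB]
    (E : (IB → ℂ) → ℝ) (Ψ : (K → Fin 2) × IB → ℂ) : ℝ :=
  sSup {r : ℝ | ∃ q : K → Fin 2 → Fin 2 → ℂ, (∀ k, ONB (q k)) ∧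
    r = avgE E (productBasis q) Ψ}

/-- Partial trace over the `A` system of `|Ψ⟩⟨Ψ|`. -/
def ptraceA {IA IB : Type*} [Fintype IA] (Ψ : IA × IB → ℂ) : Matrix IB IB ℂ :=
  Matrix.of fun y y' => ∑ x, Ψ (x, y) * conj (Ψ (x, y'))

/-- Reduced density matrix of `|Ψ⟩⟨Ψ|` on the subset `s` of the `B` qubits. -/
def reducedB {IA : Type*} [Fintype IA] {n : ℕ} (s : Finset (Fin n))
    (Ψ : IA × (Fin n → Fin 2) → ℂ) :
    Matrix ({i : Fin n // i ∈ s} → Fin 2) ({i : Fin n // i ∈ s} → Fin 2) ℂ :=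
  Matrix.of fun a b => ∑ x : IA, ∑ c : {i : Fin n // i ∉ s} → Fin 2,
    Ψ (x, fun i => if h : i ∈ s then a ⟨i, h⟩ else c ⟨i, h⟩) *
    conj (Ψ (x, fun i => if h : i ∈ s then b ⟨i, h⟩ else c ⟨i, h⟩))


/-- The `±1` sign contributed by a controlled-Z gate on the (unordered) pair `e` of qubits,
evaluated at the computational basis state `x`. -/
def czSign {n : ℕ} (x : Fin n → Fin 2) : Sym2 (Fin n) → ℂ :=
  Sym2.lift ⟨fun a b => if x a = 1 ∧ x b = 1 then (-1 : ℂ) else 1, by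
    intro a b; simp [and_comm]⟩

/-- The graph state `|G⟩ = (Π_{{a,b}∈E} CZ_{ab}) |+⟩^{⊗n}` of a simple graph `G` on `n`
vertices, written out in the computational basis. -/
def graphState {n : ℕ} (G : SimpleGraph (Fin n)) [DecidableRel G.Adj] :
    (Fin n → Fin 2) → ℂ :=
  fun x => (Real.sqrt (2 ^ n) : ℂ)⁻¹ * ∏ e ∈ G.edgeFinset, czSign x e

/-- The sign of the Pauli string `σ_z^z` at the computational basis state `x`,
i.e. `σ_z^z |x⟩ = zSign z x • |x⟩`. -/
def zSign {n : ℕ} (z x : Fin n → Fin 2) : ℂ :=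
  ∏ b, if z b = 1 ∧ x b = 1 then (-1 : ℂ) else 1

/-- The vector `σ_z^z ψ`, where `σ_z` is applied to every qubit `b` with `z b = 1`. -/
def sigmaZvec {n : ℕ} (z : Fin n → Fin 2) (ψ : (Fin n → Fin 2) → ℂ) :
    (Fin n → Fin 2) → ℂ :=
  fun x => zSign z x * ψ x

-- helpers
def natE {n : ℕ} (x : Fin n → Fin 2) : Sym2 (Fin n) → ℕ :=
  Sym2.lift ⟨fun a b => (x a : ℕ) * (x b : ℕ), fun a b => mul_comm (x a : ℕ) (x b : ℕ)⟩

def addE {n : ℕ} (x : Fin n → Fin 2) : Sym2 (Fin n) → ZMod 2 :=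
  Sym2.lift ⟨fun a b => ((x a : ℕ) : ZMod 2) + ((x b : ℕ) : ZMod 2),
    fun a b => add_comm ((x a : ℕ) : ZMod 2) ((x b : ℕ) : ZMod 2)⟩

lemma ifsign (u v : Fin 2) : (if u = 1 ∧ v = 1 then (-1:ℂ) else 1) = (-1)^((u:ℕ)*(v:ℕ)) := by
  fin_cases u <;> fin_cases v <;> norm_num

lemma czSign_eq {n : ℕ} (x : Fin n → Fin 2) (e : Sym2 (Fin n)) :
    czSign x e = (-1)^(natE x e) := by
  induction e with
  | _ a b => simp only [czSign, natE, Sym2.lift_mk]; exact ifsign _ _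

lemma zSign_eq {n : ℕ} (z x : Fin n → Fin 2) :
    zSign z x = (-1)^(∑ b, (z b : ℕ) * (x b : ℕ)) := by
  rw [zSign, ← Finset.prod_pow_eq_pow_sum]
  exact Finset.prod_congr rfl fun b _ => ifsign _ _

lemma graphState_eq {n : ℕ} (G : SimpleGraph (Fin n)) [DecidableRel G.Adj]
    (y : Fin n → Fin 2) :
    graphState G y = (Real.sqrt (2 ^ n) : ℂ)⁻¹ * (-1)^(∑ e ∈ G.edgeFinset, natE y e) := by
  rw [graphState, ← Finset.prod_pow_eq_pow_sum]
  congr 1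
  exact Finset.prod_congr rfl fun e _ => czSign_eq y e

lemma natE_flip {n : ℕ} (x : Fin n → Fin 2) (e : Sym2 (Fin n)) :
    ((natE (fun k => x k + 1) e : ℕ) : ZMod 2) = 1 + addE x e + ((natE x e : ℕ) : ZMod 2) := by
  induction e with
  | _ a b =>
    simp only [natE, addE, Sym2.lift_mk]
    revert a b
    have : ∀ u v : Fin 2, ((((u+1 : Fin 2):ℕ) * ((v+1 : Fin 2):ℕ) : ℕ) : ZMod 2)
        = 1 + (((u:ℕ):ZMod 2) + ((v:ℕ):ZMod 2)) + (((u:ℕ)*(v:ℕ) : ℕ) : ZMod 2) := by decide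
    intro a b; exact this (x a) (x b)

lemma neg_one_pow_congr {a b : ℕ} (h : (a : ZMod 2) = b) : ((-1:ℂ))^a = (-1)^b := by
  have h2 : a % 2 = b % 2 := (ZMod.natCast_eq_natCast_iff a b 2).mp h
  rw [← Nat.div_add_mod a 2, ← Nat.div_add_mod b 2, pow_add, pow_add, pow_mul, pow_mul]
  norm_num [h2]

lemma sigmaY_ne (a b : Fin 2) (h : b ≠ a + 1) : sigmaY a b = 0 := by
  fin_cases a <;> fin_cases b <;> simp_all [sigmaY]

lemma sigmaY_flip (a : Fin 2) : sigmaY a (a + 1) = Complex.I * (-1) ^ ((a : ℕ) + 1) := by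
  fin_cases a <;> simp [sigmaY]

lemma collapse {n : ℕ} (ψ : (Fin n → Fin 2) → ℂ) (x : Fin n → Fin 2) :
    sigmaYn.mulVec ψ x
      = (Complex.I ^ n * (-1) ^ (n + ∑ k, ((x k : ℕ)))) * ψ (fun k => x k + 1) := by
  have h0 : ∀ y : Fin n → Fin 2, y ≠ (fun k => x k + 1) →
      sigmaYn (I := Fin n) x y * ψ y = 0 := by
    intro y hy
    obtain ⟨k, hk⟩ := Function.ne_iff.mp hy
    have : sigmaYn (I := Fin n) x y = 0 :=
      Finset.prod_eq_zero (Finset.mem_univ k) (sigmaY_ne _ _ hk)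
    rw [this, zero_mul]
  show ∑ y, sigmaYn (I := Fin n) x y * ψ y = _
  rw [Finset.sum_eq_single _ (fun y _ => h0 y) (fun h => absurd (Finset.mem_univ _) h)]
  congr 1
  show ∏ k, sigmaY (x k) (x k + 1) = _
  rw [Finset.prod_congr rfl (fun k _ => sigmaY_flip (x k)), Finset.prod_mul_distrib,
    Finset.prod_const, Finset.prod_pow_eq_pow_sum, Finset.card_univ, Fintype.card_fin]
  rw [Finset.sum_add_distrib, Finset.sum_const, Finset.card_univ, Fintype.card_fin,
    smul_eq_mul, mul_one, add_comm]

lemma sum_edge_add {n : ℕ} (G : SimpleGraph (Fin n)) [DecidableRel G.Adj] (x : Fin n → Fin 2) :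
    ∑ e ∈ G.edgeFinset, addE x e = ∑ v, G.degree v • (((x v : ℕ)) : ZMod 2) := by
  classical
  set f : Fin n → ZMod 2 := fun v => ((x v : ℕ) : ZMod 2) with hf
  have h1 : ∑ d : G.Dart, f d.fst = ∑ v, G.degree v • f v := by
    rw [← Finset.sum_fiberwise_of_maps_to (g := fun d : G.Dart => d.fst)
      (fun d _ => Finset.mem_univ _) (fun d => f d.fst)]
    refine Finset.sum_congr rfl fun v _ => ?_
    have hc : ∀ d ∈ Finset.univ.filter (fun d : G.Dart => d.fst = v), f d.fst = f v :=
      fun d hd => by rw [(Finset.mem_filter.mp hd).2]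
    rw [Finset.sum_congr rfl hc, Finset.sum_const, G.dart_fst_fiber_card_eq_degree]
  have h2 : ∑ d : G.Dart, f d.fst = ∑ e ∈ G.edgeFinset, addE x e := by
    rw [← Finset.sum_fiberwise_of_maps_to (g := fun d : G.Dart => d.edge)
      (fun d _ => SimpleGraph.mem_edgeFinset.mpr d.edge_mem) (fun d => f d.fst)]
    refine Finset.sum_congr rfl fun e he => ?_
    induction e with
    | _ v w =>
      have hadj : G.Adj v w := SimpleGraph.mem_edgeFinset.mp he
      let d : G.Dart := ⟨(v, w), hadj⟩
      have hfib : (Finset.univ.filter fun d' : G.Dart => d'.edge = s(v, w)) = {d, d.symm} := by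
        exact d.edge_fiber
      rw [hfib, Finset.sum_insert (by simpa using d.symm_ne.symm), Finset.sum_singleton]
      simp [d, addE, SimpleGraph.Dart.symm, hf]
  rw [← h2, h1]


/-- For a simple graph `H` on `n` vertices with degree vector `D`
(`D_b = 1` iff `b` has even degree), and any `z ∈ F₂^V`, there is a phase `c ∈ {iⁿ, −iⁿ}`
with `σ_y^{⊗n} σ_z^z |H⟩ = c · σ_z^{z+D} |H⟩`. -/
theorem graph_state_sigmaY_action
    (n : ℕ) (hn : 0 < n) (H : SimpleGraph (Fin n)) [DecidableRel H.Adj]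
    (z : Fin n → Fin 2) :
    ∃ c : ℂ, (c = Complex.I ^ n ∨ c = -(Complex.I ^ n)) ∧
      sigmaYn.mulVec (sigmaZvec z (graphState H)) =
        c • sigmaZvec (fun b => z b + (if Even (H.degree b) then 1 else 0))
          (graphState H) := by
  classical
  refine ⟨Complex.I ^ n * (-1) ^ (n + H.edgeFinset.card + ∑ b, ((z b : ℕ))), ?_, ?_⟩
  · rcases Nat.even_or_odd (n + H.edgeFinset.card + ∑ b, ((z b : ℕ))) with h | h
    · left; rw [h.neg_one_pow, mul_one]
    · right; rw [h.neg_one_pow, mul_neg_one]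
  · funext x
    rw [Pi.smul_apply, smul_eq_mul, collapse]
    simp only [sigmaZvec]
    rw [zSign_eq, zSign_eq, graphState_eq, graphState_eq]
    have key : ((-1 : ℂ)) ^ ((n + ∑ k, ((x k : ℕ)))
          + (∑ b, (z b : ℕ) * (((x b + 1 : Fin 2)) : ℕ))
          + (∑ e ∈ H.edgeFinset, natE (fun k => x k + 1) e))
        = (-1) ^ ((n + H.edgeFinset.card + ∑ b, ((z b : ℕ)))
          + (∑ b, (((z b + (if Even (H.degree b) then 1 else 0) : Fin 2)) : ℕ) * ((x b : ℕ)))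
          + (∑ e ∈ H.edgeFinset, natE x e)) := by
      apply neg_one_pow_congr
      push_cast
      rw [Finset.sum_congr rfl (fun e (_ : e ∈ H.edgeFinset) => natE_flip x e)]
      rw [Finset.sum_add_distrib, Finset.sum_add_distrib, Finset.sum_const, sum_edge_add]
      have hzf : ∀ b ∈ (Finset.univ : Finset (Fin n)),
          ((z b : ℕ) : ZMod 2) * ((((x b + 1 : Fin 2)) : ℕ) : ZMod 2)
            = ((z b : ℕ) : ZMod 2) + ((z b : ℕ) : ZMod 2) * ((x b : ℕ) : ZMod 2) := by
        have : ∀ u v : Fin 2, ((u : ℕ) : ZMod 2) * (((v + 1 : Fin 2) : ℕ) : ZMod 2)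
            = ((u : ℕ) : ZMod 2) + ((u : ℕ) : ZMod 2) * ((v : ℕ) : ZMod 2) := by decide
        exact fun b _ => this (z b) (x b)
      have hD : ∀ b, ((((if Even (H.degree b) then 1 else 0 : Fin 2)) : ℕ) : ZMod 2)
          = 1 + (H.degree b : ZMod 2) := by
        intro b
        by_cases h : Even (H.degree b)
        · have : (H.degree b : ZMod 2) = 0 :=
            (ZMod.natCast_eq_zero_iff _ 2).mpr h.two_dvd
          simp [h, this]
        · have h1 : H.degree b % 2 = 1 := Nat.not_even_iff.mp h
          have : (H.degree b : ZMod 2) = 1 := by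
            rw [← ZMod.natCast_mod, h1]; rfl
          simp only [h, if_false, this]
          decide
      have hadd : ∀ u v : Fin 2, (((u + v : Fin 2) : ℕ) : ZMod 2)
          = ((u : ℕ) : ZMod 2) + ((v : ℕ) : ZMod 2) := by decide
      have hzp : ∀ b ∈ (Finset.univ : Finset (Fin n)),
          ((((z b + (if Even (H.degree b) then 1 else 0) : Fin 2)) : ℕ) : ZMod 2) * ((x b : ℕ) : ZMod 2)
            = ((z b : ℕ) : ZMod 2) * ((x b : ℕ) : ZMod 2) + ((x b : ℕ) : ZMod 2)
              + (H.degree b : ZMod 2) * ((x b : ℕ) : ZMod 2) := by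
        intro b _
        rw [hadd, hD]; ring
      rw [Finset.sum_congr rfl hzf, Finset.sum_congr rfl hzp]
      rw [Finset.sum_add_distrib, Finset.sum_add_distrib, Finset.sum_add_distrib]
      rw [Finset.sum_congr rfl (fun v (_ : v ∈ (Finset.univ : Finset (Fin n))) =>
        nsmul_eq_mul (H.degree v) (((x v : ℕ)) : ZMod 2))]
      simp only [nsmul_eq_mul, mul_one]
      ring
    rw [pow_add, pow_add, pow_add, pow_add] at key
    linear_combination (Complex.I ^ n * ((Real.sqrt (2 ^ n) : ℂ))⁻¹) * key
end QIpaper
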